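/- Let σ > 0, ν > 0 and t > 0. Let Z be a standard Gaussian random variable and let G be a Gamma(t/ν, 1/ν) distributed random variable independent of Z, and set X = σ√G · Z (the marginal of the driftless Variance Gamma process at time t). Then the kurtosis of X satisfies E[(X − E[X])⁴] / (E[(X − E[X])²])² = 3(1 + ν/t). -/

import Mathlib

open MeasureTheory ProbabilityTheory Real Set

lemma aux_gauss_Ioi {s : ℝ} (hs : -1 < s) :
    ∫ x in Ioi (0:ℝ), x ^ s * Real.exp (-(x ^ 2 / 2)) =
      (2:ℝ) ^ ((s - 1) / 2) * Real.Gamma ((s + 1) / 2) := by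
  have key := integral_comp_rpow_Ioi_of_pos
    (g := fun y : ℝ => y ^ ((s - 1) / 2) * Real.exp (-(2⁻¹ * y))) (p := (2:ℝ)) two_pos
  have h1 : ∫ x in Ioi (0:ℝ),
      ((2:ℝ) * x ^ ((2:ℝ) - 1)) • ((x ^ (2:ℝ)) ^ ((s - 1) / 2) * Real.exp (-(2⁻¹ * x ^ (2:ℝ))))
      = 2 * ∫ x in Ioi (0:ℝ), x ^ s * Real.exp (-(x ^ 2 / 2)) := by
    rw [← integral_const_mul]
    refine setIntegral_congr_fun measurableSet_Ioi fun x hx => ?_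
    have hx0 : (0:ℝ) < x := hx
    have A : x ^ ((2:ℝ) - 1) = x := by norm_num
    have B : (x ^ (2:ℝ)) ^ ((s - 1) / 2) = x ^ (s - 1) := by
      rw [← Real.rpow_mul hx0.le, show (2:ℝ) * ((s - 1) / 2) = s - 1 by ring]
    have C : x ^ (2:ℝ) = x ^ (2:ℕ) := by
      rw [show ((2:ℝ)) = ((2:ℕ):ℝ) by norm_num, Real.rpow_natCast]
    have D : x * x ^ (s - 1) = x ^ s := by
      nth_rewrite 1 [← Real.rpow_one x]
      rw [← Real.rpow_add hx0, show (1:ℝ) + (s - 1) = s by ring]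
    rw [smul_eq_mul, A, B, C, show -(2⁻¹ * (x:ℝ) ^ (2:ℕ)) = -(x ^ 2 / 2) by ring, ← D]
    ring
  have key2 : (∫ y in Ioi (0:ℝ), y ^ ((s - 1) / 2) * Real.exp (-(2⁻¹ * y)))
      = (2:ℝ) ^ ((s + 1) / 2) * Real.Gamma ((s + 1) / 2) := by
    have h := integral_rpow_mul_exp_neg_mul_Ioi (a := (s + 1) / 2) (r := 2⁻¹)
      (by linarith) (by norm_num)
    rw [show (s + 1) / 2 - 1 = (s - 1) / 2 by ring] at h
    rw [h]
    norm_num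
  rw [h1, key2] at key
  have h2 : (2:ℝ) ^ ((s + 1) / 2) = 2 * (2:ℝ) ^ ((s - 1) / 2) := by
    rw [show (s + 1) / 2 = 1 + (s - 1) / 2 by ring, Real.rpow_add two_pos, Real.rpow_one]
  rw [h2] at key
  linarith
open scoped ENNReal NNReal

lemma aux_integral_gaussianReal (g : ℝ → ℝ) :
    ∫ x, g x ∂(gaussianReal 0 1) = ∫ x, gaussianPDFReal 0 1 x * g x := by
  rw [gaussianReal_of_var_ne_zero _ one_ne_zero]
  have h : gaussianPDF 0 1 = fun x => ((gaussianPDFReal 0 1 x).toNNReal : ℝ≥0∞) := rfl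
  rw [h, integral_withDensity_eq_integral_smul
    ((measurable_gaussianPDFReal 0 1).real_toNNReal)]
  congr 1; funext x
  rw [NNReal.smul_def, smul_eq_mul, Real.coe_toNNReal _ (gaussianPDFReal_nonneg 0 1 x)]

lemma aux_pdf_eq (x : ℝ) :
    gaussianPDFReal 0 1 x = (Real.sqrt (2 * π))⁻¹ * Real.exp (-(x ^ 2 / 2)) := by
  rw [gaussianPDFReal]
  norm_num
  left
  ring

lemma aux_gaussian_even (n : ℕ) (hn : Even n) :
    ∫ x, x ^ n ∂(gaussianReal 0 1) =
      (Real.sqrt (2 * π))⁻¹ * (2 * ((2:ℝ) ^ (((n:ℝ) - 1) / 2) * Real.Gamma (((n:ℝ) + 1) / 2))) := by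
  rw [aux_integral_gaussianReal]
  have h1 : ∀ x : ℝ, gaussianPDFReal 0 1 x * x ^ n
      = (Real.sqrt (2 * π))⁻¹ * (|x| ^ n * Real.exp (-(x ^ 2 / 2))) := by
    intro x
    rw [aux_pdf_eq, hn.pow_abs]
    ring
  simp_rw [h1]
  rw [integral_const_mul]
  congr 1
  have h2 : ∫ x : ℝ, |x| ^ n * Real.exp (-(x ^ 2 / 2))
      = 2 * ∫ x in Ioi (0:ℝ), x ^ n * Real.exp (-(x ^ 2 / 2)) := by
    have := integral_comp_abs (f := fun x : ℝ => x ^ n * Real.exp (-(x ^ 2 / 2)))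
    rw [← this]
    congr 1; funext x; rw [sq_abs]
  rw [h2]
  congr 1
  have hlt : (-1:ℝ) < (n:ℝ) := lt_of_lt_of_le (by norm_num) (Nat.cast_nonneg n)
  rw [← aux_gauss_Ioi hlt]
  refine setIntegral_congr_fun measurableSet_Ioi fun x hx => ?_
  rw [Real.rpow_natCast]
lemma aux_IZ2 : ∫ x, x ^ 2 ∂(gaussianReal 0 1) = 1 := by
  rw [aux_gaussian_even 2 (by norm_num)]
  have h1 : ((2:ℕ):ℝ) = 2 := by norm_num
  rw [h1, show ((2:ℝ) - 1) / 2 = 1 / 2 by ring, ← Real.sqrt_eq_rpow,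
    show ((2:ℝ) + 1) / 2 = 1 / 2 + 1 by ring, Real.Gamma_add_one (by norm_num),
    Real.Gamma_one_half_eq, Real.sqrt_mul (by norm_num : (0:ℝ) ≤ 2)]
  have h2 : Real.sqrt 2 > 0 := Real.sqrt_pos.mpr (by norm_num)
  have h3 : Real.sqrt π > 0 := Real.sqrt_pos.mpr pi_pos
  field_simp

lemma aux_IZ4 : ∫ x, x ^ 4 ∂(gaussianReal 0 1) = 3 := by
  rw [aux_gaussian_even 4 ⟨2, rfl⟩]
  have h1 : ((4:ℕ):ℝ) = 4 := by norm_num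
  rw [h1, show ((4:ℝ) - 1) / 2 = 1 + 1 / 2 by ring, Real.rpow_add (by norm_num) 1 (1/2),
    Real.rpow_one, ← Real.sqrt_eq_rpow,
    show ((4:ℝ) + 1) / 2 = (1 / 2 + 1) + 1 by ring,
    Real.Gamma_add_one (by norm_num), Real.Gamma_add_one (by norm_num),
    Real.Gamma_one_half_eq, Real.sqrt_mul (by norm_num : (0:ℝ) ≤ 2)]
  have h2 : Real.sqrt 2 > 0 := Real.sqrt_pos.mpr (by norm_num)
  have h3 : Real.sqrt π > 0 := Real.sqrt_pos.mpr pi_pos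
  field_simp
  ring

lemma aux_IZ1 : ∫ x, x ∂(gaussianReal 0 1) = 0 := by
  rw [aux_integral_gaussianReal]
  set f : ℝ → ℝ := fun x => gaussianPDFReal 0 1 x * x with hf
  have hodd : ∀ x, f (-x) = - f x := by
    intro x
    simp only [hf]
    rw [aux_pdf_eq, aux_pdf_eq, neg_pow]
    ring_nf
  have h1 : ∫ x, f x = ∫ x, f (-x) := by
    conv_lhs => rw [← Measure.map_neg_eq_self (volume : Measure ℝ)]
    exact ((Homeomorph.neg ℝ).measurableEmbedding).integral_map _
  simp_rw [hodd, integral_neg] at h1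
  linarith
lemma aux_integral_gammaMeasure {a r : ℝ} (ha : 0 < a) (hr : 0 < r) (g : ℝ → ℝ) :
    ∫ x, g x ∂(gammaMeasure a r) = ∫ x, gammaPDFReal a r x * g x := by
  rw [gammaMeasure]
  have h : gammaPDF a r = fun x => ((gammaPDFReal a r x).toNNReal : ℝ≥0∞) := rfl
  rw [h, integral_withDensity_eq_integral_smul
    ((measurable_gammaPDFReal a r).real_toNNReal)]
  congr 1; funext x
  rw [NNReal.smul_def, smul_eq_mul, Real.coe_toNNReal _ (gammaPDFReal_nonneg ha hr x)]

lemma aux_gamma_moment {a r : ℝ} (ha : 0 < a) (hr : 0 < r) (n : ℕ) (hn : 1 ≤ n) :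
    ∫ x, x ^ n ∂(gammaMeasure a r) = (1 / r) ^ n * (Real.Gamma (a + n) / Real.Gamma a) := by
  rw [aux_integral_gammaMeasure ha hr]
  have h0 : ∫ x, gammaPDFReal a r x * x ^ n
      = ∫ x in Ioi (0:ℝ), gammaPDFReal a r x * x ^ n := by
    refine (setIntegral_eq_integral_of_forall_compl_eq_zero fun x hx => ?_).symm
    rcases lt_or_eq_of_le (not_lt.mp (fun h : (0:ℝ) < x => hx h)) with h | h
    · rw [gammaPDFReal, if_neg (not_le.mpr h), zero_mul]
    · rw [h, zero_pow (Nat.one_le_iff_ne_zero.mp hn), mul_zero]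
  rw [h0]
  have h1 : ∫ x in Ioi (0:ℝ), gammaPDFReal a r x * x ^ n
      = r ^ a / Real.Gamma a * ∫ x in Ioi (0:ℝ), x ^ (a + n - 1) * Real.exp (-(r * x)) := by
    rw [← integral_const_mul]
    refine setIntegral_congr_fun measurableSet_Ioi fun x hx => ?_
    have hx0 : (0:ℝ) < x := hx
    rw [gammaPDFReal, if_pos hx0.le]
    have e1 : x ^ (a + n - 1) = x ^ (a - 1) * x ^ (n:ℝ) := by
      rw [← Real.rpow_add hx0]; ring_nf
    rw [e1, Real.rpow_natCast]
    ring
  rw [h1, integral_rpow_mul_exp_neg_mul_Ioi (by positivity) hr]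
  have e2 : (1 / r) ^ (a + (n:ℝ)) = (1 / r) ^ a * (1 / r) ^ (n:ℝ) := by
    rw [← Real.rpow_add (by positivity)]
  have e3 : r ^ a * (1 / r) ^ a = 1 := by
    rw [← Real.mul_rpow hr.le (by positivity), mul_one_div_cancel hr.ne', Real.one_rpow]
  have e4 : ((1:ℝ) / r) ^ ((n:ℕ):ℝ) = (1 / r) ^ n := Real.rpow_natCast _ n
  have hΓ : Real.Gamma a ≠ 0 := (Real.Gamma_pos_of_pos ha).ne'
  rw [show a + (n:ℝ) - 1 = a + (n:ℝ) - 1 from rfl] at *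
  calc r ^ a / Real.Gamma a * ((1 / r) ^ (a + (n:ℝ)) * Real.Gamma (a + n))
      = (r ^ a * (1 / r) ^ a) * (1 / r) ^ ((n:ℕ):ℝ) * (Real.Gamma (a + n) / Real.Gamma a) := by
        rw [e2]; ring
    _ = (1 / r) ^ n * (Real.Gamma (a + n) / Real.Gamma a) := by rw [e3, e4, one_mul]
theorem varianceGammaProcess_kurtosis
    {Ω : Type*} [MeasurableSpace Ω] (P : Measure Ω) [IsProbabilityMeasure P]
    (σ ν t : ℝ) (hσ : 0 < σ) (hν : 0 < ν) (ht : 0 < t)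
    (G Z : Ω → ℝ) (hGm : Measurable G) (hZm : Measurable Z)
    (hG : Measure.map G P = gammaMeasure (t / ν) (1 / ν))
    (hZ : Measure.map Z P = gaussianReal 0 1)
    (hindep : IndepFun G Z P) :
    (∫ ω, (σ * Real.sqrt (G ω) * Z ω
        - ∫ ω', σ * Real.sqrt (G ω') * Z ω' ∂P) ^ 4 ∂P)
      / (∫ ω, (σ * Real.sqrt (G ω) * Z ω
        - ∫ ω', σ * Real.sqrt (G ω') * Z ω' ∂P) ^ 2 ∂P) ^ 2
      = 3 * (1 + ν / t) := by
  have ha : 0 < t / ν := div_pos ht hν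
  have hr : 0 < 1 / ν := by positivity
  -- a.e. nonnegativity under the gamma measure
  have hae : ∀ᵐ x ∂(gammaMeasure (t / ν) (1 / ν)), 0 ≤ x := by
    rw [ae_iff]
    have hs : {x : ℝ | ¬ 0 ≤ x} = Iio 0 := by ext x; simp
    rw [hs, gammaMeasure, withDensity_apply _ measurableSet_Iio]
    exact lintegral_gammaPDF_of_nonpos le_rfl
  -- gamma moments
  have IG1 : ∫ x, x ∂(gammaMeasure (t / ν) (1 / ν)) = t := by
    have h := aux_gamma_moment ha hr 1 le_rfl
    simp only [pow_one, Nat.cast_one] at h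
    rw [Real.Gamma_add_one ha.ne', one_div_one_div] at h
    have hΓ : Real.Gamma (t / ν) ≠ 0 := (Real.Gamma_pos_of_pos ha).ne'
    field_simp at h
    exact h
  have IG2 : ∫ x, x ^ 2 ∂(gammaMeasure (t / ν) (1 / ν)) = t ^ 2 + t * ν := by
    have h := aux_gamma_moment ha hr 2 (by norm_num)
    rw [show (t / ν + ((2:ℕ):ℝ)) = (t / ν + 1) + 1 by push_cast; ring,
      Real.Gamma_add_one (by positivity), Real.Gamma_add_one ha.ne', one_div_one_div] at h
    have hΓ : Real.Gamma (t / ν) ≠ 0 := (Real.Gamma_pos_of_pos ha).ne'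
    rw [h]
    field_simp
  -- product formula via independence
  have key : ∀ (φ ψ : ℝ → ℝ), Measurable φ → Measurable ψ →
      ∫ ω, φ (G ω) * ψ (Z ω) ∂P
        = (∫ x, φ x ∂(gammaMeasure (t / ν) (1 / ν))) * ∫ x, ψ x ∂(gaussianReal 0 1) := by
    intro φ ψ hφ hψ
    have h := IndepFun.integral_fun_mul_eq_mul_integral (hindep.comp hφ hψ)
      ((hφ.comp hGm).aestronglyMeasurable) ((hψ.comp hZm).aestronglyMeasurable)
    rw [← hG, ← hZ, integral_map hGm.aemeasurable hφ.aestronglyMeasurable,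
      integral_map hZm.aemeasurable hψ.aestronglyMeasurable]
    simpa [Function.comp] using h
  have hsqm : Measurable fun x : ℝ => Real.sqrt x := Real.continuous_sqrt.measurable
  -- mean zero
  have hmean : ∫ ω', σ * Real.sqrt (G ω') * Z ω' ∂P = 0 := by
    have h := key (fun x => σ * Real.sqrt x) (fun x => x) (hsqm.const_mul σ) measurable_id
    rw [aux_IZ1, mul_zero] at h
    exact h
  rw [hmean]
  simp only [sub_zero]
  -- second moment
  have h2 : ∫ ω, (σ * Real.sqrt (G ω) * Z ω) ^ 2 ∂P = σ ^ 2 * t := by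
    have hk := key (fun x => σ ^ 2 * Real.sqrt x ^ 2) (fun x => x ^ 2)
      ((hsqm.pow_const 2).const_mul _) (measurable_id.pow_const 2)
    have hL : ∫ ω, (σ * Real.sqrt (G ω) * Z ω) ^ 2 ∂P
        = ∫ ω, (σ ^ 2 * Real.sqrt (G ω) ^ 2) * Z ω ^ 2 ∂P := by
      congr 1; funext ω; ring
    have hg2 : ∫ x, σ ^ 2 * Real.sqrt x ^ 2 ∂(gammaMeasure (t / ν) (1 / ν)) = σ ^ 2 * t := by
      have hc : ∫ x, σ ^ 2 * Real.sqrt x ^ 2 ∂(gammaMeasure (t / ν) (1 / ν))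
          = ∫ x, σ ^ 2 * x ∂(gammaMeasure (t / ν) (1 / ν)) :=
        integral_congr_ae (hae.mono fun x hx => by dsimp only; rw [Real.sq_sqrt hx])
      rw [hc, integral_const_mul, IG1]
    rw [hL, hk, hg2, aux_IZ2, mul_one]
  -- fourth moment
  have h4 : ∫ ω, (σ * Real.sqrt (G ω) * Z ω) ^ 4 ∂P = σ ^ 4 * (t ^ 2 + t * ν) * 3 := by
    have hk := key (fun x => σ ^ 4 * Real.sqrt x ^ 4) (fun x => x ^ 4)
      ((hsqm.pow_const 4).const_mul _) (measurable_id.pow_const 4)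
    have hL : ∫ ω, (σ * Real.sqrt (G ω) * Z ω) ^ 4 ∂P
        = ∫ ω, (σ ^ 4 * Real.sqrt (G ω) ^ 4) * Z ω ^ 4 ∂P := by
      congr 1; funext ω; ring
    have hg4 : ∫ x, σ ^ 4 * Real.sqrt x ^ 4 ∂(gammaMeasure (t / ν) (1 / ν))
        = σ ^ 4 * (t ^ 2 + t * ν) := by
      have hc : ∫ x, σ ^ 4 * Real.sqrt x ^ 4 ∂(gammaMeasure (t / ν) (1 / ν))
          = ∫ x, σ ^ 4 * x ^ 2 ∂(gammaMeasure (t / ν) (1 / ν)) :=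
        integral_congr_ae (hae.mono fun x hx => by
          dsimp only
          rw [show Real.sqrt x ^ 4 = (Real.sqrt x ^ 2) ^ 2 by ring, Real.sq_sqrt hx])
      rw [hc, integral_const_mul, IG2]
    rw [hL, hk, hg4, aux_IZ4]
  rw [h2, h4]
  have hσ' : σ ≠ 0 := hσ.ne'
  have ht' : t ≠ 0 := ht.ne'
  field_simp
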